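/- The sequence (n ↦ x₀x₁⋯xₙ), where xᵢ = FreeSemigroup.of i, viewed as a sequence in Z, has no convergent subsequence, even though the lengths of its terms tend to infinity. -/

import Mathlib

open OnePoint Filter Topology

/-- The list of letters of a word in the free semigroup on `ℕ`. -/
def wordLetters (u : FreeSemigroup ℕ) : List ℕ := u.head :: u.tail

/-- For a subset `U` of `OnePoint (FreeSemigroup ℕ)` and `k : ℕ`, the set of words
all of whose letters lie in `{0, …, k-1}` and which do not belong to `U`. -/
def boundedOutside (U : Set (OnePoint (FreeSemigroup ℕ))) (k : ℕ) : Set (FreeSemigroup ℕ) :=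
  {u | (∀ x ∈ wordLetters u, x < k) ∧ (u : OnePoint (FreeSemigroup ℕ)) ∉ U}

/-- The inductive-limit topology on `OnePoint (FreeSemigroup ℕ)` of the one-point
compactifications of the discrete free semigroups on the finite alphabets
`{0, …, k-1}`: a set `U` is open iff, whenever `∞ ∈ U`, for every `k` only finitely
many words with letters in `{0, …, k-1}` lie outside `U`. -/
def Ztop : TopologicalSpace (OnePoint (FreeSemigroup ℕ)) where
  IsOpen U := ∞ ∈ U → ∀ k : ℕ, (boundedOutside U k).Finite
  isOpen_univ := fun _ k => by
    convert Set.finite_empty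
    simp [boundedOutside]
  isOpen_inter := fun U V hU hV h k => by
    refine ((hU h.1 k).union (hV h.2 k)).subset ?_
    rintro u ⟨hb, hn⟩
    by_cases hu : (u : OnePoint (FreeSemigroup ℕ)) ∈ U
    · exact Or.inr ⟨hb, fun hv => hn ⟨hu, hv⟩⟩
    · exact Or.inl ⟨hb, hu⟩
  isOpen_sUnion := fun S hS h k => by
    obtain ⟨U, hUS, hU⟩ := h
    refine (hS U hUS hU k).subset ?_
    rintro u ⟨hb, hn⟩
    exact ⟨hb, fun h' => hn ⟨U, hUS, h'⟩⟩

/-- The word `x₀ x₁ ⋯ xₙ` in the free semigroup on `ℕ`. -/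
def initialProdWord : ℕ → FreeSemigroup ℕ
  | 0 => FreeSemigroup.of 0
  | n + 1 => initialProdWord n * FreeSemigroup.of (n + 1)

lemma wordLetters_mul (u : FreeSemigroup ℕ) (a : ℕ) :
    wordLetters (u * FreeSemigroup.of a) = wordLetters u ++ [a] := rfl

lemma wordLetters_initial (n : ℕ) :
    wordLetters (initialProdWord n) = List.range (n + 1) := by
  induction n with
  | zero => rfl
  | succ n ih =>
    rw [initialProdWord, wordLetters_mul, ih]
    exact List.range_succ.symm

lemma length_initial (n : ℕ) : (initialProdWord n).length = n + 1 := by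
  induction n with
  | zero => rfl
  | succ n ih => rw [initialProdWord, FreeSemigroup.length_mul, ih, FreeSemigroup.length_of]

lemma initial_injective : Function.Injective initialProdWord := fun a b h => by
  have := congrArg FreeSemigroup.length h
  rw [length_initial, length_initial] at this
  omega

lemma Ztop_isOpen {U : Set (OnePoint (FreeSemigroup ℕ))}
    (h : ∞ ∈ U → ∀ k, (boundedOutside U k).Finite) : IsOpen[Ztop] U := h

/-- The sequence `(x₀x₁⋯xₙ)ₙ`, viewed in `Z = OnePoint (FreeSemigroup ℕ)` with the
inductive-limit topology, has no convergent subsequence, even though the lengths of its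
terms tend to infinity. -/
theorem initialProdWord_no_convergent_subsequence :
    letI : TopologicalSpace (OnePoint (FreeSemigroup ℕ)) := Ztop
    Tendsto (fun n => (initialProdWord n).length) atTop atTop
    ∧ ¬ ∃ φ : ℕ → ℕ, StrictMono φ ∧ ∃ L : OnePoint (FreeSemigroup ℕ),
        Tendsto (fun n => ((initialProdWord (φ n) : OnePoint (FreeSemigroup ℕ))))
          atTop (𝓝 L) := by
  constructor
  · have : ∀ n, n ≤ (initialProdWord n).length := fun n => by rw [length_initial]; omega
    exact tendsto_atTop_mono this tendsto_id
  · rintro ⟨φ, hφ, L, hL⟩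
    letI : TopologicalSpace (OnePoint (FreeSemigroup ℕ)) := Ztop
    obtain _ | u := L
    · -- L = ∞
      set U : Set (OnePoint (FreeSemigroup ℕ)) :=
        {x | ∀ n, x ≠ (initialProdWord n : OnePoint (FreeSemigroup ℕ))} with hUdef
      have hmem : ∞ ∈ U := fun n => OnePoint.infty_ne_coe _
      have hopen : IsOpen U := by
        refine Ztop_isOpen fun _ k => ?_
        refine ((Set.finite_Iio k).image initialProdWord).subset ?_
        rintro u ⟨hb, hn⟩
        simp only [hUdef, Set.mem_setOf_eq, not_forall, not_not] at hn
        obtain ⟨n, hn⟩ := hn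
        have hu : u = initialProdWord n := by
          exact_mod_cast hn
        refine ⟨n, ?_, hu.symm⟩
        have : n ∈ wordLetters u := by
          rw [hu, wordLetters_initial]
          simp
        exact hb n this
      have := (hL.eventually_mem (hopen.mem_nhds hmem)).exists
      obtain ⟨n, hn⟩ := this
      exact hn (φ n) rfl
    · -- L = some u
      have hopen : IsOpen ({(u : OnePoint (FreeSemigroup ℕ))} : Set _) := by
        refine Ztop_isOpen fun h => absurd h ?_
        simp [OnePoint.infty_ne_coe]
      have hmem := hL.eventually_mem (hopen.mem_nhds rfl)
      rw [Filter.eventually_atTop] at hmem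
      obtain ⟨N, hN⟩ := hmem
      have h1 : initialProdWord (φ N) = u := by
        have := hN N le_rfl
        rw [Set.mem_singleton_iff] at this
        exact_mod_cast this
      have h2 : initialProdWord (φ (N+1)) = u := by
        have := hN (N+1) (by omega)
        rw [Set.mem_singleton_iff] at this
        exact_mod_cast this
      have := initial_injective (h1.trans h2.symm)
      have := hφ.injective this
      omega
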